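/- Let (X,T) be a minimal Cantor system and U ⊆ X a nonempty clopen set. The map F from the space M(X,T) of T-invariant Borel probability measures on X to the space M(U,T_U) of T_U-invariant Borel probability measures on U, defined by F(μ)(B) = μ(B)/μ(U) for Borel B ⊆ U, is well-defined and bijective. -/

import Mathlib

open Set MeasureTheory ENNReal

/-- Return time function `r_A(x) = inf {n > 0 : Tⁿ x ∈ A}`. -/
noncomputable def retTime {α : Type*} (T : α → α) (A : Set α) (x : α) : ℕ :=
  sInf {n : ℕ | 0 < n ∧ T^[n] x ∈ A}

/-- Minimality: every (two-sided) orbit is dense. -/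
def IsMinimalHomeo {X : Type*} [TopologicalSpace X] (T : X ≃ₜ X) : Prop :=
  ∀ x : X, Dense {y : X | ∃ n : ℤ, (T.toEquiv ^ n) x = y}

/-- The space of `T`-invariant Borel probability measures. -/
def InvProb {α : Type*} [MeasurableSpace α] (T : α → α) : Type _ :=
  {μ : Measure α // IsProbabilityMeasure μ ∧ ∀ s, MeasurableSet s → μ (T ⁻¹' s) = μ s}

lemma retTime_spec {α : Type*} (T : α → α) (A : Set α) (x : α)
    (h : ∃ n, 0 < n ∧ T^[n] x ∈ A) :
    0 < retTime T A x ∧ T^[retTime T A x] x ∈ A :=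
  Nat.sInf_mem h

lemma retTime_le {α : Type*} (T : α → α) (A : Set α) (x : α) {n : ℕ}
    (hn : 0 < n) (hx : T^[n] x ∈ A) : retTime T A x ≤ n :=
  Nat.sInf_le ⟨hn, hx⟩

lemma retTime_not {α : Type*} (T : α → α) (A : Set α) (x : α) {k : ℕ}
    (hk : 0 < k) (hlt : k < retTime T A x) : T^[k] x ∉ A :=
  fun h => absurd hlt (not_lt.2 (retTime_le T A x hk h))

lemma ennreal_cancel {a x y : ℝ≥0∞} (h0 : a ≠ 0) (ht : a ≠ ⊤)
    (h : a⁻¹ * x = a⁻¹ * y) : x = y := by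
  have h2 := congrArg (a * ·) h
  simpa [← mul_assoc, ENNReal.mul_inv_cancel h0 ht] using h2

/-- Cover lemma: bounded forward and backward hitting times into a nonempty open set. -/
lemma aux_cover {X : Type*} [TopologicalSpace X] [CompactSpace X]
    (T : X ≃ₜ X) (hmin : IsMinimalHomeo T) (U : Set X) (hUo : IsOpen U)
    (hne : U.Nonempty) :
    ∃ N : ℕ, 0 < N ∧ ∀ x : X,
      (∃ m, 1 ≤ m ∧ m ≤ N ∧ (⇑T)^[m] x ∈ U) ∧
      (∃ m, 1 ≤ m ∧ m ≤ N ∧ (⇑T.symm)^[m] x ∈ U) := by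
  have hz : ∀ (m : ℕ) (x : X), (T.toEquiv ^ (m : ℤ)) x = (⇑T)^[m] x := by
    intro m x
    rw [zpow_natCast, ← Equiv.Perm.iterate_eq_pow]
    rfl
  have hzneg : ∀ (m : ℕ) (x : X), (T.toEquiv ^ (-(m : ℤ))) x = (⇑T.symm)^[m] x := by
    intro m x
    rw [zpow_neg, ← inv_zpow, zpow_natCast, ← Equiv.Perm.iterate_eq_pow]
    rfl
  have hopen : ∀ n : ℤ, IsOpen {x : X | (T.toEquiv ^ n) x ∈ U} := by
    intro n
    rcases n with m | m
    · have : {x : X | (T.toEquiv ^ (Int.ofNat m)) x ∈ U} = (⇑T)^[m] ⁻¹' U := by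
        ext x; simp only [mem_setOf_eq, mem_preimage, Int.ofNat_eq_coe, hz]
      rw [this]
      exact (T.continuous.iterate m).isOpen_preimage U hUo
    · have : {x : X | (T.toEquiv ^ (Int.negSucc m)) x ∈ U} = (⇑T.symm)^[m+1] ⁻¹' U := by
        ext x
        simp only [mem_setOf_eq, mem_preimage]
        rw [show (Int.negSucc m) = -((m+1 : ℕ) : ℤ) by rfl, hzneg]
      rw [this]
      exact (T.symm.continuous.iterate (m+1)).isOpen_preimage U hUo
  have hcover : (univ : Set X) ⊆ ⋃ n : ℤ, {x : X | (T.toEquiv ^ n) x ∈ U} := by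
    intro x _
    obtain ⟨y, ⟨n, hn⟩, hyU⟩ := (hmin x).exists_mem_open hUo hne
    exact mem_iUnion.2 ⟨n, by simp only [mem_setOf_eq, hn]; exact hyU⟩
  obtain ⟨t, ht⟩ := isCompact_univ.elim_finite_subcover _ hopen hcover
  set M : ℕ := t.sup Int.natAbs with hM
  have hbound : ∀ n ∈ t, n.natAbs ≤ M := fun n hn => Finset.le_sup hn
  refine ⟨2 * M + 1, Nat.succ_pos _, fun x => ?_⟩
  constructor
  · obtain ⟨n, hnt, hnx⟩ : ∃ n ∈ t, (T.toEquiv ^ n) ((⇑T)^[M+1] x) ∈ U := by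
      have := ht (mem_univ ((⇑T)^[M+1] x))
      simpa using this
    have hxx : (T.toEquiv ^ (n + (M + 1 : ℕ))) x ∈ U := by
      rw [zpow_add, Equiv.Perm.mul_apply, hz]
      exact hnx
    have hb := hbound n hnt
    refine ⟨(n + (M + 1 : ℕ)).toNat, by omega, by omega, ?_⟩
    have : ((n + (M + 1 : ℕ)).toNat : ℤ) = n + (M + 1 : ℕ) := by omega
    rw [← hz, this]
    exact hxx
  · obtain ⟨n, hnt, hnx⟩ : ∃ n ∈ t, (T.toEquiv ^ n) ((⇑T.symm)^[M+1] x) ∈ U := by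
      have := ht (mem_univ ((⇑T.symm)^[M+1] x))
      simpa using this
    have hxx : (T.toEquiv ^ (n - (M + 1 : ℕ))) x ∈ U := by
      rw [sub_eq_add_neg, zpow_add, Equiv.Perm.mul_apply, hzneg]
      exact hnx
    have hb := hbound n hnt
    refine ⟨((M + 1 : ℕ) - n).toNat, by omega, by omega, ?_⟩
    have : (-(((M + 1 : ℕ) - n).toNat : ℤ)) = n - (M + 1 : ℕ) := by omega
    rw [← hzneg, this]
    exact hxx

theorem stmt2 {X : Type*} [MetricSpace X] [CompactSpace X]
    [TotallyDisconnectedSpace X] [PerfectSpace X]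
    [MeasurableSpace X] [BorelSpace X]
    (T : X ≃ₜ X) (hmin : IsMinimalHomeo T)
    (U : Set X) (hU : IsClopen U) (hne : U.Nonempty)
    (TU : U → U) (hTU : ∀ x : U, (TU x : X) = (⇑T)^[retTime (⇑T) U (x : X)] (x : X)) :
    ∃ F : InvProb (⇑T) → InvProb TU,
      (∀ (μ : InvProb (⇑T)) (B : Set U), MeasurableSet B →
        (F μ).1 B = μ.1 (Subtype.val '' B) / μ.1 U) ∧
      Function.Bijective F := by
  obtain ⟨N, hN0, hcov⟩ := aux_cover T hmin U hU.isOpen hne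
  set r : X → ℕ := retTime (⇑T) U with hrdef
  set r' : X → ℕ := retTime (⇑T.symm) U with hr'def
  -- basic return-time facts
  have hrS : ∀ x : X, 0 < r x ∧ (⇑T)^[r x] x ∈ U := fun x =>
    retTime_spec (⇑T) U x (let ⟨m, h1, _, h3⟩ := (hcov x).1; ⟨m, h1, h3⟩)
  have hrpos : ∀ x, 0 < r x := fun x => (hrS x).1
  have hrmem : ∀ x, (⇑T)^[r x] x ∈ U := fun x => (hrS x).2
  have hrleN : ∀ x, r x ≤ N := fun x => by
    obtain ⟨m, h1, h2, h3⟩ := (hcov x).1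
    exact le_trans (retTime_le (⇑T) U x h1 h3) h2
  have hrnot : ∀ (x : X) (k : ℕ), 0 < k → k < r x → (⇑T)^[k] x ∉ U := fun x k hk hlt =>
    retTime_not (⇑T) U x hk hlt
  have hrle : ∀ (x : X) (n : ℕ), 0 < n → (⇑T)^[n] x ∈ U → r x ≤ n := fun x n hn h =>
    retTime_le (⇑T) U x hn h
  have hr'S : ∀ x : X, 0 < r' x ∧ (⇑T.symm)^[r' x] x ∈ U := fun x =>
    retTime_spec (⇑T.symm) U x (let ⟨m, h1, _, h3⟩ := (hcov x).2; ⟨m, h1, h3⟩)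
  have hr'pos : ∀ x, 0 < r' x := fun x => (hr'S x).1
  have hr'mem : ∀ x, (⇑T.symm)^[r' x] x ∈ U := fun x => (hr'S x).2
  have hr'leN : ∀ x, r' x ≤ N := fun x => by
    obtain ⟨m, h1, h2, h3⟩ := (hcov x).2
    exact le_trans (retTime_le (⇑T.symm) U x h1 h3) h2
  have hr'not : ∀ (x : X) (k : ℕ), 0 < k → k < r' x → (⇑T.symm)^[k] x ∉ U := fun x k hk hlt =>
    retTime_not (⇑T.symm) U x hk hlt
  -- iterate cancellation
  have hcan : ∀ (n : ℕ) (x : X), (⇑T.symm)^[n] ((⇑T)^[n] x) = x := fun n x =>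
    (Function.LeftInverse.iterate T.symm_apply_apply n) x
  have hcan' : ∀ (n : ℕ) (x : X), (⇑T)^[n] ((⇑T.symm)^[n] x) = x := fun n x =>
    (Function.LeftInverse.iterate T.apply_symm_apply n) x
  have hshift : ∀ (a b : ℕ) (x : X), a ≤ b →
      (⇑T)^[a] ((⇑T.symm)^[b] x) = (⇑T.symm)^[b - a] x := by
    intro a b x hab
    have hb : b = a + (b - a) := by omega
    calc (⇑T)^[a] ((⇑T.symm)^[b] x)
        = (⇑T)^[a] ((⇑T.symm)^[a] ((⇑T.symm)^[b-a] x)) := by rw [← Function.iterate_add_apply, ← hb]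
      _ = (⇑T.symm)^[b - a] x := hcan' a _
  have hshift' : ∀ (a b : ℕ) (x : X), a ≤ b →
      (⇑T.symm)^[a] ((⇑T)^[b] x) = (⇑T)^[b - a] x := by
    intro a b x hab
    have hb : b = a + (b - a) := by omega
    calc (⇑T.symm)^[a] ((⇑T)^[b] x)
        = (⇑T.symm)^[a] ((⇑T)^[a] ((⇑T)^[b-a] x)) := by rw [← Function.iterate_add_apply, ← hb]
      _ = (⇑T)^[b - a] x := hcan a _
  -- measurability
  have hUm : MeasurableSet U := hU.isClosed.measurableSet
  have hTm : Measurable ⇑T := T.continuous.measurable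
  have hTm' : Measurable ⇑T.symm := T.symm.continuous.measurable
  have hitm : ∀ n : ℕ, Measurable ((⇑T)^[n]) := fun n => hTm.iterate n
  have hitm' : ∀ n : ℕ, Measurable ((⇑T.symm)^[n]) := fun n => hTm'.iterate n
  have hrfib : ∀ n : ℕ, MeasurableSet {x : X | r x = n} := by
    intro n
    rcases Nat.eq_zero_or_pos n with hn | hn
    · have : {x : X | r x = n} = ∅ := by
        ext x; simp only [mem_setOf_eq, mem_empty_iff_false, iff_false]
        intro h; exact absurd (h ▸ hrpos x) (by omega)
      rw [this]; exact MeasurableSet.empty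
    · have : {x : X | r x = n} =
          ((⇑T)^[n] ⁻¹' U) ∩ ⋂ k ∈ Set.Ioo 0 n, ((⇑T)^[k] ⁻¹' U)ᶜ := by
        ext x
        simp only [mem_setOf_eq, mem_inter_iff, mem_preimage, mem_iInter, mem_compl_iff,
          mem_Ioo]
        constructor
        · rintro rfl
          exact ⟨hrmem x, fun k hk => hrnot x k hk.1 hk.2⟩
        · rintro ⟨h1, h2⟩
          have hle : r x ≤ n := hrle x n hn h1
          rcases lt_or_eq_of_le hle with hlt | heq
          · exact absurd (hrmem x) (h2 (r x) ⟨hrpos x, hlt⟩)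
          · exact heq
      rw [this]
      exact ((hitm n) hUm).inter
        (MeasurableSet.biInter (Set.to_countable _) fun k _ => ((hitm k) hUm).compl)
  have hrgt : ∀ k : ℕ, MeasurableSet {x : X | k < r x} := by
    intro k
    have : {x : X | k < r x} = ⋂ j ∈ Set.Iic k, {x : X | r x = j}ᶜ := by
      ext x
      simp only [mem_setOf_eq, mem_iInter, mem_compl_iff, mem_Iic]
      constructor
      · intro h j hj heq; omega
      · intro h
        by_contra hcon
        exact h (r x) (by omega) rfl
    rw [this]
    exact MeasurableSet.biInter (Set.to_countable _) fun j _ => (hrfib j).compl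
  -- the tower sets
  set E : ℕ → Set X := fun n => U ∩ {x : X | r x = n} with hEdef
  set S : ℕ → Set X := fun k => U ∩ {x : X | k < r x} with hSdef
  set W : ℕ → Set X := fun n => (⇑T.symm)^[n] ⁻¹' (E n) with hWdef
  set D : ℕ → Set X := fun k => (⇑T.symm)^[k] ⁻¹' (S k) with hDdef
  have hEm : ∀ n, MeasurableSet (E n) := fun n => hUm.inter (hrfib n)
  have hSm : ∀ k, MeasurableSet (S k) := fun k => hUm.inter (hrgt k)
  have hWm : ∀ n, MeasurableSet (W n) := fun n => (hitm' n) (hEm n)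
  have hDm : ∀ k, MeasurableSet (D k) := fun k => (hitm' k) (hSm k)
  have hS0 : S 0 = U := by
    ext x; simp only [hSdef, mem_inter_iff, mem_setOf_eq, and_iff_left_iff_imp]
    intro _; exact hrpos x
  have hSN : S N = ∅ := by
    ext x; simp only [hSdef, mem_inter_iff, mem_setOf_eq, mem_empty_iff_false, iff_false,
      not_and]
    intro _; exact not_lt.2 (hrleN x)
  -- disjointness facts
  have hEdisj : (↑(Finset.Icc 1 N) : Set ℕ).PairwiseDisjoint E := by
    intro a _ b _ hab
    refine Set.disjoint_left.2 fun {x} hxa hxb => hab ?_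
    rw [← hxa.2, ← hxb.2]
  have hWkey : ∀ (n m : ℕ) (x : X), 0 < n → n < m → x ∈ W n → x ∈ W m → False := by
    intro n m x hn hnm hxn hxm
    have ha : (⇑T.symm)^[n] x ∈ E n := hxn
    have hb : (⇑T.symm)^[m] x ∈ E m := hxm
    have heq : (⇑T)^[m - n] ((⇑T.symm)^[m] x) = (⇑T.symm)^[n] x := by
      rw [hshift (m - n) m x (by omega)]
      congr 1
      omega
    have hrb : r ((⇑T.symm)^[m] x) = m := hb.2
    have := hrnot ((⇑T.symm)^[m] x) (m - n) (by omega) (by omega)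
    rw [heq] at this
    exact this ha.1
  have hWdisj : (↑(Finset.Icc 1 N) : Set ℕ).PairwiseDisjoint W := by
    intro a ha b hb hab
    simp only [Finset.coe_Icc, mem_Icc] at ha hb
    refine Set.disjoint_left.2 fun {x} hxa hxb => ?_
    rcases lt_or_gt_of_ne hab with h | h
    · exact hWkey a b x (by omega) h hxa hxb
    · exact hWkey b a x (by omega) h hxb hxa
  have hDkey : ∀ (j k : ℕ) (x : X), j < k → x ∈ D j → x ∈ D k → False := by
    intro j k x hjk hxj hxk
    have ha : (⇑T.symm)^[j] x ∈ S j := hxj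
    have hb : (⇑T.symm)^[k] x ∈ S k := hxk
    have heq : (⇑T)^[k - j] ((⇑T.symm)^[k] x) = (⇑T.symm)^[j] x := by
      rw [hshift (k - j) k x (by omega)]
      congr 1
      omega
    have hrb : k < r ((⇑T.symm)^[k] x) := hb.2
    have := hrnot ((⇑T.symm)^[k] x) (k - j) (by omega) (by omega)
    rw [heq] at this
    exact this ha.1
  have hDdisj : (↑(Finset.range N) : Set ℕ).PairwiseDisjoint D := by
    intro a _ b _ hab
    refine Set.disjoint_left.2 fun {x} hxa hxb => ?_
    rcases lt_or_gt_of_ne hab with h | h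
    · exact hDkey a b x h hxa hxb
    · exact hDkey b a x h hxb hxa
  -- covers
  have hWU : (⋃ n ∈ Finset.Icc 1 N, W n) = U := by
    apply Set.Subset.antisymm
    · intro x hx
      simp only [mem_iUnion] at hx
      obtain ⟨n, _, hxn⟩ := hx
      have hy : (⇑T.symm)^[n] x ∈ E n := hxn
      have : x = (⇑T)^[r ((⇑T.symm)^[n] x)] ((⇑T.symm)^[n] x) := by
        rw [hy.2, hcan']
      rw [this]
      exact hrmem _
    · intro y hy
      have hm1 : 1 ≤ r' y := hr'pos y
      have hmN : r' y ≤ N := hr'leN y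
      have hxU : (⇑T.symm)^[r' y] y ∈ U := hr'mem y
      have hrx : r ((⇑T.symm)^[r' y] y) = r' y := by
        have hle : r ((⇑T.symm)^[r' y] y) ≤ r' y := by
          apply hrle _ _ (hr'pos y)
          rw [hcan']
          exact hy
        rcases lt_or_eq_of_le hle with hlt | heq
        · exfalso
          have h2 : (⇑T)^[r ((⇑T.symm)^[r' y] y)] ((⇑T.symm)^[r' y] y)
              = (⇑T.symm)^[r' y - r ((⇑T.symm)^[r' y] y)] y :=
            hshift _ _ y (le_of_lt hlt)
          have h3 := hrmem ((⇑T.symm)^[r' y] y)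
          rw [h2] at h3
          have hpos := hrpos ((⇑T.symm)^[r' y] y)
          exact hr'not y _ (by omega) (by omega) h3
        · exact heq
      simp only [mem_iUnion]
      exact ⟨r' y, Finset.mem_Icc.2 ⟨hm1, hmN⟩, ⟨hxU, hrx⟩⟩
  have hDuniv : (⋃ k ∈ Finset.range N, D k) = univ := by
    apply Set.eq_univ_of_forall
    intro x
    simp only [mem_iUnion]
    by_cases hxU : x ∈ U
    · refine ⟨0, Finset.mem_range.2 hN0, ?_⟩
      show (⇑T.symm)^[0] x ∈ S 0
      rw [Function.iterate_zero_apply, hS0]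
      exact hxU
    · have hyU : (⇑T.symm)^[r' x] x ∈ U := hr'mem x
      have hry : r' x < r ((⇑T.symm)^[r' x] x) := by
        by_contra hcon
        push_neg at hcon
        have h2 : (⇑T)^[r ((⇑T.symm)^[r' x] x)] ((⇑T.symm)^[r' x] x)
            = (⇑T.symm)^[r' x - r ((⇑T.symm)^[r' x] x)] x := hshift _ _ x hcon
        have h3 := hrmem ((⇑T.symm)^[r' x] x)
        rw [h2] at h3
        rcases Nat.eq_zero_or_pos (r' x - r ((⇑T.symm)^[r' x] x)) with h0 | h0
        · rw [h0, Function.iterate_zero_apply] at h3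
          exact hxU h3
        · have hpos := hrpos ((⇑T.symm)^[r' x] x)
          exact hr'not x _ h0 (by omega) h3
      have hkN : r' x < N := lt_of_lt_of_le hry (hrleN _)
      exact ⟨r' x, Finset.mem_range.2 hkN, ⟨hyU, hry⟩⟩
  -- invariance transport
  have hinvIter : ∀ (μ : Measure X), (∀ s, MeasurableSet s → μ (⇑T ⁻¹' s) = μ s) →
      ∀ (n : ℕ) (s : Set X), MeasurableSet s → μ ((⇑T)^[n] ⁻¹' s) = μ s := by
    intro μ hinv n
    induction n with
    | zero => intro s _; simp
    | succ n ih =>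
      intro s hs
      have : (⇑T)^[n+1] ⁻¹' s = ⇑T ⁻¹' ((⇑T)^[n] ⁻¹' s) := by
        rw [Function.iterate_succ]
        rfl
      rw [this, hinv _ ((hitm n) hs), ih s hs]
  have hswap : ∀ (μ : Measure X), (∀ s, MeasurableSet s → μ (⇑T ⁻¹' s) = μ s) →
      ∀ (n : ℕ) (s v : Set X), MeasurableSet s → MeasurableSet v →
      μ ((⇑T.symm)^[n] ⁻¹' s ∩ v) = μ (s ∩ (⇑T)^[n] ⁻¹' v) := by
    intro μ hinv n s v hs hv
    have h1 := hinvIter μ hinv n ((⇑T.symm)^[n] ⁻¹' s ∩ v) (((hitm' n) hs).inter hv)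
    rw [← h1]
    congr 1
    rw [Set.preimage_inter]
    congr 1
    ext x
    simp only [mem_preimage, hcan n x]
  -- master set identity
  have hTUset : ∀ A : Set X,
      (Subtype.val '' (TU ⁻¹' (Subtype.val ⁻¹' A))) =
        ⋃ n ∈ Finset.Icc 1 N, (E n ∩ (⇑T)^[n] ⁻¹' A) := by
    intro A
    ext x
    simp only [mem_image, mem_preimage, mem_iUnion, Finset.mem_Icc]
    constructor
    · rintro ⟨u, hu, rfl⟩
      refine ⟨r (u : X), ⟨hrpos _, hrleN _⟩, ⟨u.2, rfl⟩, ?_⟩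
      rw [mem_preimage, ← hTU u]
      exact hu
    · rintro ⟨n, ⟨_, _⟩, ⟨hxU, hrn⟩, hA⟩
      refine ⟨⟨x, hxU⟩, ?_, rfl⟩
      show ((TU ⟨x, hxU⟩ : U) : X) ∈ A
      rw [hTU ⟨x, hxU⟩]
      show (⇑T)^[r x] x ∈ A
      rw [show r x = n from hrn]
      exact hA
  -- key measure identities
  have keyF : ∀ (μ : Measure X), (∀ s, MeasurableSet s → μ (⇑T ⁻¹' s) = μ s) →
      ∀ (V : Set X), MeasurableSet V → V ⊆ U →
      μ (⋃ n ∈ Finset.Icc 1 N, (E n ∩ (⇑T)^[n] ⁻¹' V)) = μ V := by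
    intro μ hinv V hVm hVU
    rw [measure_biUnion_finset
      (hEdisj.mono fun n => Set.inter_subset_left)
      (fun n _ => (hEm n).inter ((hitm n) hVm))]
    have hterm : ∀ n ∈ Finset.Icc 1 N, μ (E n ∩ (⇑T)^[n] ⁻¹' V) = μ (W n ∩ V) := by
      intro n _
      rw [hswap μ hinv n (E n) V (hEm n) hVm]
    rw [Finset.sum_congr rfl hterm]
    rw [← measure_biUnion_finset
      (hWdisj.mono fun n => Set.inter_subset_left)
      (fun n _ => (hWm n).inter hVm)]
    congr 1
    have : (⋃ n ∈ Finset.Icc 1 N, (W n ∩ V)) = (⋃ n ∈ Finset.Icc 1 N, W n) ∩ V := by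
      ext x
      simp only [mem_iUnion, mem_inter_iff]
      tauto
    rw [this, hWU, Set.inter_eq_self_of_subset_right hVU]
  have keyKac : ∀ (μ : Measure X), (∀ s, MeasurableSet s → μ (⇑T ⁻¹' s) = μ s) →
      ∀ (A : Set X), MeasurableSet A →
      μ A = ∑ k ∈ Finset.range N, μ (S k ∩ (⇑T)^[k] ⁻¹' A) := by
    intro μ hinv A hA
    have h1 : A = ⋃ k ∈ Finset.range N, (D k ∩ A) := by
      have : (⋃ k ∈ Finset.range N, (D k ∩ A)) = (⋃ k ∈ Finset.range N, D k) ∩ A := by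
        ext x
        simp only [mem_iUnion, mem_inter_iff]
        tauto
      rw [this, hDuniv, Set.univ_inter]
    conv_lhs => rw [h1]
    rw [measure_biUnion_finset
      (hDdisj.mono fun k => Set.inter_subset_left)
      (fun k _ => (hDm k).inter hA)]
    exact Finset.sum_congr rfl fun k _ => hswap μ hinv k (S k) A (hSm k) hA
  -- embedding facts
  have hemb : MeasurableEmbedding (Subtype.val : U → X) := MeasurableEmbedding.subtype_coe hUm
  have hcomap : ∀ (μ : Measure X) (B : Set U),
      (μ.comap Subtype.val) B = μ (Subtype.val '' B) := fun μ B => hemb.comap_apply μ B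
  -- positivity of μ U
  have hμUpos : ∀ (μ : Measure X), IsProbabilityMeasure μ →
      (∀ s, MeasurableSet s → μ (⇑T ⁻¹' s) = μ s) → μ U ≠ 0 := by
    intro μ hprob hinv h0
    have hcover : (univ : Set X) ⊆ ⋃ m ∈ Finset.Icc 1 N, (⇑T)^[m] ⁻¹' U := by
      intro x _
      obtain ⟨m, h1, h2, h3⟩ := (hcov x).1
      exact mem_biUnion (Finset.mem_Icc.2 ⟨h1, h2⟩) h3
    have hle : μ (univ : Set X) ≤ ∑ m ∈ Finset.Icc 1 N, μ ((⇑T)^[m] ⁻¹' U) :=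
      le_trans (measure_mono hcover) (measure_biUnion_finset_le _ _)
    have : ∀ m ∈ Finset.Icc 1 N, μ ((⇑T)^[m] ⁻¹' U) = 0 := by
      intro m _
      rw [hinvIter μ hinv m U hUm, h0]
    rw [Finset.sum_congr rfl this, Finset.sum_const, smul_zero] at hle
    have := hprob.measure_univ
    rw [this] at hle
    exact absurd hle (by simp)
  -- the forward invariance of induced measure
  have hFinvKey : ∀ (μ : Measure X), (∀ s, MeasurableSet s → μ (⇑T ⁻¹' s) = μ s) →
      ∀ (B : Set U), MeasurableSet B →
      μ (Subtype.val '' (TU ⁻¹' B)) = μ (Subtype.val '' B) := by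
    intro μ hinv B hB
    have hVm : MeasurableSet (Subtype.val '' B) := hemb.measurableSet_image.2 hB
    have hVU : Subtype.val '' B ⊆ U := by rintro x ⟨u, _, rfl⟩; exact u.2
    have hBeq : B = Subtype.val ⁻¹' (Subtype.val '' B) :=
      (Set.preimage_image_eq B Subtype.val_injective).symm
    calc μ (Subtype.val '' (TU ⁻¹' B))
        = μ (⋃ n ∈ Finset.Icc 1 N, (E n ∩ (⇑T)^[n] ⁻¹' (Subtype.val '' B))) := by
          conv_lhs => rw [hBeq]
          rw [hTUset]
      _ = μ (Subtype.val '' B) := keyF μ hinv _ hVm hVU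
  -- define F
  set F : InvProb (⇑T) → InvProb TU := fun μ =>
    ⟨(μ.1 U)⁻¹ • μ.1.comap Subtype.val,
      ⟨⟨by
        have h1 : (μ.1.comap Subtype.val) (univ : Set U) = μ.1 U := by
          rw [hcomap, Subtype.coe_image_univ]
        rw [Measure.smul_apply, h1, smul_eq_mul,
          ENNReal.inv_mul_cancel (hμUpos μ.1 μ.2.1 μ.2.2)
            (by haveI := μ.2.1; exact measure_ne_top μ.1 U)]⟩,
      fun s hs => by
        rw [Measure.smul_apply, Measure.smul_apply, smul_eq_mul, smul_eq_mul,
          hcomap, hcomap, hFinvKey μ.1 μ.2.2 s hs]⟩⟩ with hFdef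
  have hform : ∀ (μ : InvProb (⇑T)) (B : Set U), MeasurableSet B →
      (F μ).1 B = μ.1 (Subtype.val '' B) / μ.1 U := by
    intro μ B _
    rw [hFdef]
    simp only [Measure.smul_apply, smul_eq_mul]
    rw [hcomap, div_eq_mul_inv, mul_comm]
  refine ⟨F, hform, ?_, ?_⟩
  · -- injectivity
    intro μ ν h
    have ha0 : μ.1 U ≠ 0 := hμUpos μ.1 μ.2.1 μ.2.2
    have hat : μ.1 U ≠ ⊤ := by haveI := μ.2.1; exact measure_ne_top μ.1 U
    have hb0 : ν.1 U ≠ 0 := hμUpos ν.1 ν.2.1 ν.2.2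
    have hbt : ν.1 U ≠ ⊤ := by haveI := ν.2.1; exact measure_ne_top ν.1 U
    -- values on subsets of U
    have hval : ∀ (V : Set X), MeasurableSet V → V ⊆ U →
        (μ.1 U)⁻¹ * μ.1 V = (ν.1 U)⁻¹ * ν.1 V := by
      intro V hV hVU
      have hBm : MeasurableSet (Subtype.val ⁻¹' V : Set U) := measurable_subtype_coe hV
      have himg : Subtype.val '' (Subtype.val ⁻¹' V : Set U) = V := by
        rw [Set.image_preimage_eq_inter_range, Subtype.range_coe]
        exact Set.inter_eq_self_of_subset_left hVU
      have h1 := congrArg (fun m => m.1 (Subtype.val ⁻¹' V : Set U)) h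
      simp only [hform μ _ hBm, hform ν _ hBm, himg] at h1
      rw [div_eq_mul_inv, div_eq_mul_inv, mul_comm, mul_comm (ν.1 V)] at h1
      exact h1
    -- subsets of U appearing in Kac
    have hSsub : ∀ (k : ℕ) (A : Set X), S k ∩ (⇑T)^[k] ⁻¹' A ⊆ U := fun k A x hx => hx.1.1
    have haEb : μ.1 U = ν.1 U := by
      have h1 := keyKac μ.1 μ.2.2 univ MeasurableSet.univ
      have h2 := keyKac ν.1 ν.2.2 univ MeasurableSet.univ
      rw [μ.2.1.measure_univ] at h1
      rw [ν.2.1.measure_univ] at h2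
      have h3 : (μ.1 U)⁻¹ * ∑ k ∈ Finset.range N, μ.1 (S k ∩ (⇑T)^[k] ⁻¹' univ)
          = (ν.1 U)⁻¹ * ∑ k ∈ Finset.range N, ν.1 (S k ∩ (⇑T)^[k] ⁻¹' univ) := by
        rw [Finset.mul_sum, Finset.mul_sum]
        exact Finset.sum_congr rfl fun k _ =>
          hval _ ((hSm k).inter ((hitm k) MeasurableSet.univ)) (hSsub k univ)
      rw [← h1, ← h2, mul_one, mul_one] at h3
      have h4 := congrArg (fun z : ℝ≥0∞ => z⁻¹) h3
      simpa using h4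
    have hAB : ∀ (V : Set X), MeasurableSet V → V ⊆ U → μ.1 V = ν.1 V := by
      intro V hV hVU
      have h1 := hval V hV hVU
      rw [← haEb] at h1
      exact ennreal_cancel ha0 hat h1
    apply Subtype.ext
    apply Measure.ext
    intro A hA
    rw [keyKac μ.1 μ.2.2 A hA, keyKac ν.1 ν.2.2 A hA]
    exact Finset.sum_congr rfl fun k _ =>
      hAB _ ((hSm k).inter ((hitm k) hA)) (hSsub k A)
  · -- surjectivity
    intro ν
    haveI hνp : IsProbabilityMeasure ν.1 := ν.2.1
    set ν' : Measure X := ν.1.map Subtype.val with hν'def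
    haveI hν'p : IsProbabilityMeasure ν' :=
      Measure.isProbabilityMeasure_map measurable_subtype_coe.aemeasurable
    have hν' : ∀ A : Set X, MeasurableSet A → ν' A = ν.1 (Subtype.val ⁻¹' A) := fun A hA =>
      Measure.map_apply measurable_subtype_coe hA
    set ρ : Measure X :=
      ∑ k ∈ Finset.range N, Measure.map ((⇑T)^[k]) (ν'.restrict (S k)) with hρdef
    have hρ : ∀ A : Set X, MeasurableSet A →
        ρ A = ∑ k ∈ Finset.range N, ν' ((⇑T)^[k] ⁻¹' A ∩ S k) := by
      intro A hA
      rw [hρdef, Measure.finset_sum_apply]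
      exact Finset.sum_congr rfl fun k _ => by
        rw [Measure.map_apply (hitm k) hA, Measure.restrict_apply ((hitm k) hA)]
    have hρU : ∀ V : Set X, MeasurableSet V → V ⊆ U → ρ V = ν' V := by
      intro V hV hVU
      rw [hρ V hV]
      rw [Finset.sum_eq_single_of_mem 0 (Finset.mem_range.2 hN0) ?side]
      case side =>
        intro k _ hk0
        have hempty : (⇑T)^[k] ⁻¹' V ∩ S k = ∅ := by
          ext x
          simp only [mem_inter_iff, mem_preimage, mem_empty_iff_false, iff_false, not_and]
          intro hxV hxS
          exact absurd (hVU hxV) (hrnot x k (Nat.pos_of_ne_zero hk0) hxS.2)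
        rw [hempty, measure_empty]
      rw [Function.iterate_zero, Set.preimage_id, hS0,
        Set.inter_eq_self_of_subset_left hVU]
    have hone : ν' ((⇑T)^[0] ⁻¹' (univ : Set X) ∩ S 0) = 1 := by
      rw [Function.iterate_zero, Set.preimage_id, Set.univ_inter, hS0, hν' U hUm,
        Subtype.coe_preimage_self, measure_univ]
    have hρge1 : (1 : ℝ≥0∞) ≤ ρ univ := by
      rw [hρ univ MeasurableSet.univ, ← hone]
      exact Finset.single_le_sum (f := fun k => ν' ((⇑T)^[k] ⁻¹' (univ : Set X) ∩ S k))
        (fun i _ => zero_le) (Finset.mem_range.2 hN0)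
    have hρ0 : ρ univ ≠ 0 := (lt_of_lt_of_le zero_lt_one hρge1).ne'
    have hρt : ρ univ ≠ ⊤ := by
      have hle : ρ univ ≤ (N : ℝ≥0∞) := by
        rw [hρ univ MeasurableSet.univ]
        calc ∑ k ∈ Finset.range N, ν' ((⇑T)^[k] ⁻¹' (univ : Set X) ∩ S k)
            ≤ ∑ _k ∈ Finset.range N, (1 : ℝ≥0∞) :=
              Finset.sum_le_sum fun k _ => prob_le_one
          _ = (N : ℝ≥0∞) := by simp
      exact ne_top_of_le_ne_top (ENNReal.natCast_ne_top N) hle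
    -- invariance of ρ
    have hρinv : ∀ A : Set X, MeasurableSet A → ρ (⇑T ⁻¹' A) = ρ A := by
      intro A hA
      have hTA : MeasurableSet (⇑T ⁻¹' A) := hTm hA
      rw [hρ _ hTA, hρ _ hA]
      have hstep : ∀ k : ℕ, (⇑T)^[k] ⁻¹' (⇑T ⁻¹' A) = (⇑T)^[k+1] ⁻¹' A := by
        intro k
        rw [Function.iterate_succ']
        rfl
      have hsplit : ∀ k : ℕ, ν' ((⇑T)^[k+1] ⁻¹' A ∩ S k) =
          ν' ((⇑T)^[k+1] ⁻¹' A ∩ S (k+1)) + ν' ((⇑T)^[k+1] ⁻¹' A ∩ E (k+1)) := by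
        intro k
        have hset : (⇑T)^[k+1] ⁻¹' A ∩ S k =
            ((⇑T)^[k+1] ⁻¹' A ∩ S (k+1)) ∪ ((⇑T)^[k+1] ⁻¹' A ∩ E (k+1)) := by
          ext x
          simp only [mem_inter_iff, mem_union, mem_preimage, hSdef, hEdef, mem_setOf_eq]
          constructor
          · rintro ⟨hxA, hxU, hk⟩
            rcases eq_or_lt_of_le (Nat.succ_le_of_lt hk) with he | hl
            · exact Or.inr ⟨hxA, hxU, he.symm⟩
            · exact Or.inl ⟨hxA, hxU, hl⟩
          · rintro (⟨hxA, hxU, hk⟩ | ⟨hxA, hxU, hk⟩)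
            · exact ⟨hxA, hxU, by omega⟩
            · exact ⟨hxA, hxU, by omega⟩
        rw [hset, measure_union ?dd (((hitm (k+1)) hA).inter (hEm (k+1)))]
        case dd =>
          refine Set.disjoint_left.2 fun {x} hx1 hx2 => ?_
          have h1 : k + 1 < r x := hx1.2.2
          have h2 : r x = k + 1 := hx2.2.2
          omega
      have hf0' : ν' ((⇑T)^[0] ⁻¹' A ∩ S 0) = ν.1 (Subtype.val ⁻¹' A) := by
        rw [Function.iterate_zero, Set.preimage_id, hS0, hν' (A ∩ U) (hA.inter hUm)]
        congr 1
        ext u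
        simp [u.2]
      have hsum1 : (∑ k ∈ Finset.range N, ν' ((⇑T)^[k+1] ⁻¹' A ∩ S (k+1)))
            + ν' ((⇑T)^[0] ⁻¹' A ∩ S 0)
          = ∑ k ∈ Finset.range N, ν' ((⇑T)^[k] ⁻¹' A ∩ S k) := by
        have h := Finset.sum_range_succ' (fun j => ν' ((⇑T)^[j] ⁻¹' A ∩ S j)) N
        rw [Finset.sum_range_succ (fun j => ν' ((⇑T)^[j] ⁻¹' A ∩ S j)) N] at h
        have hN' : ν' ((⇑T)^[N] ⁻¹' A ∩ S N) = 0 := by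
          rw [hSN, Set.inter_empty, measure_empty]
        simp only [hN', add_zero] at h
        exact h.symm
      have hsumg : ∑ k ∈ Finset.range N, ν' ((⇑T)^[k+1] ⁻¹' A ∩ E (k+1))
          = ν.1 (Subtype.val ⁻¹' A) := by
        rw [← measure_biUnion_finset ?gd (fun k _ => ((hitm (k+1)) hA).inter (hEm (k+1)))]
        case gd =>
          intro a _ b _ hab
          refine Set.disjoint_left.2 fun {x} hxa hxb => hab ?_
          have h1 : r x = a + 1 := hxa.2.2
          have h2 : r x = b + 1 := hxb.2.2
          omega
        have hsets : (⋃ k ∈ Finset.range N, ((⇑T)^[k+1] ⁻¹' A ∩ E (k+1)))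
            = ⋃ n ∈ Finset.Icc 1 N, (E n ∩ (⇑T)^[n] ⁻¹' A) := by
          ext x
          simp only [mem_iUnion, Finset.mem_range, Finset.mem_Icc, mem_inter_iff]
          constructor
          · rintro ⟨k, hk, h1, h2⟩
            exact ⟨k + 1, ⟨by omega, by omega⟩, h2, h1⟩
          · rintro ⟨n, ⟨h1n, hnN⟩, h2, h3⟩
            refine ⟨n - 1, by omega, ?_⟩
            rw [show n - 1 + 1 = n by omega]
            exact ⟨h3, h2⟩
        rw [hsets]
        rw [hν' _ (Finset.measurableSet_biUnion _ fun n _ => (hEm n).inter ((hitm n) hA))]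
        have hpre : Subtype.val ⁻¹' (⋃ n ∈ Finset.Icc 1 N, (E n ∩ (⇑T)^[n] ⁻¹' A))
            = TU ⁻¹' (Subtype.val ⁻¹' A) := by
          rw [← hTUset A, Set.preimage_image_eq _ Subtype.val_injective]
        rw [hpre, ν.2.2 _ (measurable_subtype_coe hA)]
      calc ∑ k ∈ Finset.range N, ν' ((⇑T)^[k] ⁻¹' (⇑T ⁻¹' A) ∩ S k)
          = ∑ k ∈ Finset.range N, (ν' ((⇑T)^[k+1] ⁻¹' A ∩ S (k+1))
              + ν' ((⇑T)^[k+1] ⁻¹' A ∩ E (k+1))) :=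
            Finset.sum_congr rfl fun k _ => by rw [hstep k]; exact hsplit k
        _ = (∑ k ∈ Finset.range N, ν' ((⇑T)^[k+1] ⁻¹' A ∩ S (k+1)))
              + ∑ k ∈ Finset.range N, ν' ((⇑T)^[k+1] ⁻¹' A ∩ E (k+1)) :=
            Finset.sum_add_distrib
        _ = (∑ k ∈ Finset.range N, ν' ((⇑T)^[k+1] ⁻¹' A ∩ S (k+1)))
              + ν' ((⇑T)^[0] ⁻¹' A ∩ S 0) := by rw [hsumg, hf0']
        _ = ∑ k ∈ Finset.range N, ν' ((⇑T)^[k] ⁻¹' A ∩ S k) := hsum1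
    -- the preimage measure
    refine ⟨⟨(ρ univ)⁻¹ • ρ,
      ⟨⟨by rw [Measure.smul_apply, smul_eq_mul, ENNReal.inv_mul_cancel hρ0 hρt]⟩,
        fun s hs => by
          rw [Measure.smul_apply, Measure.smul_apply, smul_eq_mul, smul_eq_mul,
            hρinv s hs]⟩⟩, ?_⟩
    apply Subtype.ext
    apply Measure.ext
    intro B hB
    refine (hform _ B hB).trans ?_
    have hVm : MeasurableSet (Subtype.val '' B) := hemb.measurableSet_image.2 hB
    have hVU : Subtype.val '' B ⊆ U := by rintro x ⟨u, _, rfl⟩; exact u.2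
    have h1 : ((ρ univ)⁻¹ • ρ) (Subtype.val '' B) = (ρ univ)⁻¹ * ν.1 B := by
      rw [Measure.smul_apply, smul_eq_mul, hρU _ hVm hVU, hν' _ hVm,
        Set.preimage_image_eq _ Subtype.val_injective]
    have h2 : ((ρ univ)⁻¹ • ρ) U = (ρ univ)⁻¹ := by
      rw [Measure.smul_apply, smul_eq_mul, hρU U hUm subset_rfl, hν' U hUm,
        Subtype.coe_preimage_self, hνp.measure_univ, mul_one]
    show ((ρ univ)⁻¹ • ρ) (Subtype.val '' B) / ((ρ univ)⁻¹ • ρ) U = ν.1 B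
    rw [h1, h2, div_eq_mul_inv, mul_comm ((ρ univ)⁻¹) (ν.1 B), mul_assoc,
      ENNReal.mul_inv_cancel (ENNReal.inv_ne_zero.2 hρt) (ENNReal.inv_ne_top.2 hρ0),
      mul_one]
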